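/- (Jeandel–Rolin) For every positive integer k: if the tiling problem for k Wang bars is undecidable (i.e., the predicate on codes of sets of exactly k Wang bars given by 'the encoded set tiles the plane' is not computable), then the tiling problem for Wang tiles with color deficiency k−1 is undecidable (i.e., the predicate on codes of finite sets T of Wang tiles with cd(T) = k−1 given by 'the encoded set tiles the plane' is not computable). -/

import Mathlib

/-- A Wang tile: a quadruple (north, east, south, west) of colors (natural numbers). -/
abbrev WangTile : Type := ℕ × ℕ × ℕ × ℕ

def WangTile.north (t : WangTile) : ℕ := t.1
def WangTile.east  (t : WangTile) : ℕ := t.2.1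
def WangTile.south (t : WangTile) : ℕ := t.2.2.1
def WangTile.west  (t : WangTile) : ℕ := t.2.2.2

/-- `f : ℤ × ℤ → WangTile` is a tiling of the plane by (translated copies of) tiles
of `T`: adjacent edges carry the same color. -/
def IsWangTiling (T : Finset WangTile) (f : ℤ × ℤ → WangTile) : Prop :=
  (∀ p, f p ∈ T) ∧
  (∀ x y : ℤ, (f (x, y)).east = (f (x + 1, y)).west) ∧
  (∀ x y : ℤ, (f (x, y)).north = (f (x, y + 1)).south)

/-- The finite set `T` of Wang tiles tiles the plane. -/
def TilesPlane (T : Finset WangTile) : Prop := ∃ f, IsWangTiling T f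

/-- A Wang bar: a list of top colors, a list of bottom colors (of the same positive
length `l`), a left color and a right color. -/
abbrev WangBar : Type := List ℕ × List ℕ × ℕ × ℕ

def WangBar.top    (b : WangBar) : List ℕ := b.1
def WangBar.bottom (b : WangBar) : List ℕ := b.2.1
def WangBar.left   (b : WangBar) : ℕ := b.2.2.1
def WangBar.right  (b : WangBar) : ℕ := b.2.2.2

/-- The length of a Wang bar. -/
def WangBar.len (b : WangBar) : ℕ := b.1.length

/-- A genuine Wang bar has positive length and as many bottom colors as top colors. -/
def WangBar.IsValid (b : WangBar) : Prop := 0 < b.len ∧ b.top.length = b.bottom.length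

/-- A tiling of the plane by translated copies of bars of `B`, recorded by the function
`f` sending each unit cell to the bar covering it together with the index of the cell
inside that bar.  The conditions say that the cells of one placed bar are consecutive
cells of one row, that colors of horizontally adjacent bars match at their common
vertical unit segment, and that colors of vertically adjacent bars match at every
common horizontal unit segment. -/
def IsBarTiling (B : Finset WangBar) (f : ℤ × ℤ → WangBar × ℕ) : Prop :=
  (∀ p, (f p).1 ∈ B) ∧
  (∀ p, (f p).2 < (f p).1.len) ∧
  (∀ x y : ℤ, (f (x, y)).2 + 1 < (f (x, y)).1.len →
      f (x + 1, y) = ((f (x, y)).1, (f (x, y)).2 + 1)) ∧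
  (∀ x y : ℤ, 0 < (f (x, y)).2 →
      f (x - 1, y) = ((f (x, y)).1, (f (x, y)).2 - 1)) ∧
  (∀ x y : ℤ, (f (x, y)).2 + 1 = (f (x, y)).1.len →
      (f (x + 1, y)).2 = 0 ∧ (f (x, y)).1.right = (f (x + 1, y)).1.left) ∧
  (∀ x y : ℤ, (f (x, y)).1.top.getD (f (x, y)).2 0 =
      (f (x, y + 1)).1.bottom.getD (f (x, y + 1)).2 0)

/-- The finite set `B` of Wang bars tiles the plane. -/
def BarsTilePlane (B : Finset WangBar) : Prop := ∃ f, IsBarTiling B f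

/-- The set of the (at most four) edge colors of a Wang tile. -/
def WangTile.colors (t : WangTile) : Finset ℕ := {t.north, t.east, t.south, t.west}

/-- `c(T)`: the set of distinct colors occurring on the edges of tiles of `T`. -/
def tileSetColors (T : Finset WangTile) : Finset ℕ := T.biUnion WangTile.colors

/-- The color deficiency `cd(T) = n(T) - c(T)`. -/
def colorDeficiency (T : Finset WangTile) : ℕ := T.card - (tileSetColors T).card

namespace JR

def lcode : List ℕ → ℕ
  | [] => 0
  | a :: l => Nat.pair a (lcode l) + 1

theorem lcode_inj : ∀ {l m : List ℕ}, lcode l = lcode m → l = m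
  | [], [], _ => rfl
  | [], _ :: _, h => by simp [lcode] at h
  | _ :: _, [], h => by simp [lcode] at h
  | a :: l, b :: m, h => by
    simp only [lcode, Nat.add_right_cancel_iff, Nat.pair_eq_pair] at h
    rw [h.1, lcode_inj h.2]

def barCode (b : WangBar) : ℕ :=
  Nat.pair (lcode b.1) (Nat.pair (lcode b.2.1) (Nat.pair b.2.2.1 b.2.2.2))

theorem barCode_inj {b b' : WangBar} (h : barCode b = barCode b') : b = b' := by
  obtain ⟨t, bt, l, r⟩ := b
  obtain ⟨t', bt', l', r'⟩ := b'
  simp only [barCode, Nat.pair_eq_pair] at h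
  obtain ⟨h1, h2, h3, h4⟩ := h
  simp [lcode_inj h1, lcode_inj h2, h3, h4]

def icol (b : WangBar) (i : ℕ) : ℕ := 3 * Nat.pair (barCode b) i + 1

theorem icol_inj {b b' : WangBar} {i i' : ℕ} (h : icol b i = icol b' i') :
    b = b' ∧ i = i' := by
  unfold icol at h
  have h2 : Nat.pair (barCode b) i = Nat.pair (barCode b') i' := by omega
  rw [Nat.pair_eq_pair] at h2
  exact ⟨barCode_inj h2.1, h2.2⟩

theorem icol_mod (b : WangBar) (i : ℕ) : icol b i % 3 = 1 := by
  unfold icol; omega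

def ncol (b : WangBar) (i : ℕ) : ℕ := 3 * b.1.getD i 0
def ecol (b : WangBar) (i : ℕ) : ℕ :=
  if i + 1 = b.1.length then 3 * b.2.2.2 else icol b (i + 1)
def scol (b : WangBar) (i : ℕ) : ℕ := 3 * b.2.1.getD i 0
def wcol (b : WangBar) (i : ℕ) : ℕ :=
  if i = 0 then 3 * b.2.2.1 else icol b i

def btile (b : WangBar) (i : ℕ) : WangTile := (ncol b i, ecol b i, scol b i, wcol b i)

theorem ncol_mod (b i) : ncol b i % 3 = 0 := by unfold ncol; omega
theorem scol_mod (b i) : scol b i % 3 = 0 := by unfold scol; omega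
theorem ecol_mod (b i) : ecol b i % 3 ≠ 2 := by
  unfold ecol; split
  · omega
  · have := icol_mod b (i + 1); omega
theorem wcol_mod (b i) : wcol b i % 3 ≠ 2 := by
  unfold wcol; split
  · omega
  · have := icol_mod b i; omega

theorem list_eq_singleton {l : List ℕ} (h : l.length = 1) : l = [l.getD 0 0] := by
  match l, h with
  | [a], _ => rfl

theorem btile_inj {b b' : WangBar} {i i' : ℕ} (hb : b.IsValid) (hb' : b'.IsValid)
    (h : btile b i = btile b' i') : b = b' ∧ i = i' := by
  simp only [btile, Prod.mk.injEq] at h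
  obtain ⟨hN, hE, hS, hW⟩ := h
  obtain ⟨hbl, hbv⟩ := hb
  obtain ⟨hbl', hbv'⟩ := hb'
  unfold WangBar.len at hbl hbl'
  unfold WangBar.top WangBar.bottom at hbv hbv'
  by_cases h0 : i = 0 <;> by_cases h0' : i' = 0
  · subst h0; subst h0'
    refine ⟨?_, rfl⟩
    unfold ecol at hE
    split at hE
    · split at hE
      · next hl hl' =>
        unfold ncol at hN; unfold scol at hS; unfold wcol at hW
        rw [if_pos rfl, if_pos rfl] at hW
        have h1 : b.1 = b'.1 := by
          rw [list_eq_singleton (show b.1.length = 1 by omega),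
              list_eq_singleton (show b'.1.length = 1 by omega)]
          simp only [List.cons.injEq, and_true]; omega
        have h2 : b.2.1 = b'.2.1 := by
          rw [list_eq_singleton (show b.2.1.length = 1 by omega),
              list_eq_singleton (show b'.2.1.length = 1 by omega)]
          simp only [List.cons.injEq, and_true]; omega
        have h3 : b.2.2.1 = b'.2.2.1 := by omega
        have h4 : b.2.2.2 = b'.2.2.2 := by omega
        exact Prod.ext h1 (Prod.ext h2 (Prod.ext h3 h4))
      · have := icol_mod b' (0 + 1); omega
    · split at hE
      · have := icol_mod b (0 + 1); omega
      · exact (icol_inj hE).1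
  · exfalso
    unfold wcol at hW
    rw [if_pos h0, if_neg h0'] at hW
    have := icol_mod b' i'; omega
  · exfalso
    unfold wcol at hW
    rw [if_neg h0, if_pos h0'] at hW
    have := icol_mod b i; omega
  · unfold wcol at hW
    rw [if_neg h0, if_neg h0'] at hW
    exact icol_inj hW

def WangTile.colors (t : WangTile) : Finset ℕ := {t.north, t.east, t.south, t.west}
def tileSetColors (T : Finset WangTile) : Finset ℕ := T.biUnion WangTile.colors
def colorDeficiency (T : Finset WangTile) : ℕ := T.card - (tileSetColors T).card

def tilesOf (B : Finset WangBar) : Finset WangTile :=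
  B.biUnion fun b => (Finset.range b.1.length).image (btile b)

theorem mem_tilesOf {B : Finset WangBar} {t : WangTile} :
    t ∈ tilesOf B ↔ ∃ b ∈ B, ∃ i, i < b.1.length ∧ btile b i = t := by
  simp [tilesOf]

theorem mem_tileSetColors {T : Finset WangTile} {c : ℕ} :
    c ∈ tileSetColors T ↔ ∃ t ∈ T, c ∈ WangTile.colors t := by
  simp [tileSetColors]

theorem colors_btile {c : ℕ} {b : WangBar} {i : ℕ} (h : c ∈ WangTile.colors (btile b i)) :
    c = ncol b i ∨ c = ecol b i ∨ c = scol b i ∨ c = wcol b i := by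
  simpa [WangTile.colors, btile, WangTile.north, WangTile.east, WangTile.south,
    WangTile.west, Finset.mem_insert, Finset.mem_singleton] using h

theorem colors_tilesOf_mod {B : Finset WangBar} {c : ℕ}
    (hc : c ∈ tileSetColors (tilesOf B)) : c % 3 ≠ 2 := by
  rw [mem_tileSetColors] at hc
  obtain ⟨t, ht, hct⟩ := hc
  rw [mem_tilesOf] at ht
  obtain ⟨b, -, i, -, rfl⟩ := ht
  rcases colors_btile hct with rfl | rfl | rfl | rfl
  · rw [ncol_mod]; omega
  · exact ecol_mod b i
  · rw [scol_mod]; omega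
  · exact wcol_mod b i

/-- number of distinct colors + k bounds, for valid bar sets -/
theorem card_bounds {B : Finset WangBar} {k : ℕ} (hk : 1 ≤ k) (hcard : B.card = k)
    (hval : ∀ b ∈ B, b.IsValid) :
    k ≤ (tilesOf B).card ∧
      (tilesOf B).card + 1 ≤ (tileSetColors (tilesOf B)).card + k := by
  classical
  set T0 := tilesOf B with hT0
  set S1 : Finset WangTile := B.image (fun b => btile b 0) with hS1
  set S2 : Finset WangTile := T0.filter (fun t => t.2.2.2 % 3 = 1) with hS2
  have hS1sub : S1 ⊆ T0 := by
    intro t ht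
    rw [hS1, Finset.mem_image] at ht
    obtain ⟨b, hb, rfl⟩ := ht
    exact mem_tilesOf.mpr ⟨b, hb, 0, (hval b hb).1, rfl⟩
  have hS1card : S1.card = k := by
    rw [hS1, Finset.card_image_of_injOn, hcard]
    intro b hb b' hb' h
    exact (btile_inj (hval b hb) (hval b' hb') h).1
  have hk_le : k ≤ T0.card := hS1card ▸ Finset.card_le_card hS1sub
  refine ⟨hk_le, ?_⟩
  -- T0 ⊆ S1 ∪ S2
  have hsub : T0 ⊆ S1 ∪ S2 := by
    intro t ht
    obtain ⟨b, hb, i, hi, rfl⟩ := mem_tilesOf.mp ht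
    by_cases h0 : i = 0
    · subst h0
      exact Finset.mem_union_left _ (Finset.mem_image.mpr ⟨b, hb, rfl⟩)
    · refine Finset.mem_union_right _ (Finset.mem_filter.mpr ⟨ht, ?_⟩)
      show wcol b i % 3 = 1
      unfold wcol; rw [if_neg h0]; exact icol_mod b i
  -- west is injective on S2
  have hS2inj : Set.InjOn (fun t : WangTile => t.2.2.2) S2 := by
    intro t ht t' ht' h
    simp only [hS2, Finset.mem_coe, Finset.mem_filter] at ht ht'
    obtain ⟨b, -, i, -, rfl⟩ := mem_tilesOf.mp ht.1
    obtain ⟨b', -, i', -, rfl⟩ := mem_tilesOf.mp ht'.1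
    have hm := ht.2
    have hm' := ht'.2
    simp only at h hm hm'
    show btile b i = btile b' i'
    have hi0 : i ≠ 0 := by
      intro h0; rw [show (btile b i).2.2.2 = wcol b i from rfl] at hm
      unfold wcol at hm; rw [if_pos h0] at hm; omega
    have hi0' : i' ≠ 0 := by
      intro h0; rw [show (btile b' i').2.2.2 = wcol b' i' from rfl] at hm'
      unfold wcol at hm'; rw [if_pos h0] at hm'; omega
    have hw : wcol b i = wcol b' i' := h
    unfold wcol at hw; rw [if_neg hi0, if_neg hi0'] at hw
    obtain ⟨rfl, rfl⟩ := icol_inj hw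
    rfl
  have hS2colors : S2.image (fun t : WangTile => t.2.2.2) ⊆ tileSetColors T0 := by
    intro c hc
    rw [Finset.mem_image] at hc
    obtain ⟨t, ht, rfl⟩ := hc
    refine mem_tileSetColors.mpr ⟨t, (Finset.mem_filter.mp ht).1, ?_⟩
    simp [WangTile.colors, WangTile.west]
  -- an extra color ≡ 0 mod 3
  obtain ⟨b0, hb0⟩ := Finset.card_pos.mp (by omega : 0 < B.card)
  have hw0 : ncol b0 0 ∈ tileSetColors T0 := by
    refine mem_tileSetColors.mpr ⟨btile b0 0, mem_tilesOf.mpr ⟨b0, hb0, 0, (hval b0 hb0).1, rfl⟩, ?_⟩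
    simp [WangTile.colors, WangTile.north, btile]
  have hw0not : ncol b0 0 ∉ S2.image (fun t : WangTile => t.2.2.2) := by
    intro hmem
    rw [Finset.mem_image] at hmem
    obtain ⟨t, ht, heq⟩ := hmem
    have := (Finset.mem_filter.mp ht).2
    have := ncol_mod b0 0
    omega
  have hins : insert (ncol b0 0) (S2.image (fun t : WangTile => t.2.2.2)) ⊆ tileSetColors T0 := by
    intro c hc
    rcases Finset.mem_insert.mp hc with rfl | hc
    · exact hw0
    · exact hS2colors hc
  have hcount : S2.card + 1 ≤ (tileSetColors T0).card := by
    have h1 : (insert (ncol b0 0) (S2.image (fun t : WangTile => t.2.2.2))).card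
        = S2.card + 1 := by
      rw [Finset.card_insert_of_notMem hw0not, Finset.card_image_of_injOn hS2inj]
    calc S2.card + 1 = _ := h1.symm
      _ ≤ _ := Finset.card_le_card hins
  have := Finset.card_le_card hsub
  have := Finset.card_union_le S1 S2
  omega

def pads (k : ℕ) (B : Finset WangBar) : Finset WangTile :=
  ((((tileSetColors (tilesOf B)).sort (· ≤ ·)).take
      ((tileSetColors (tilesOf B)).card + k - (tilesOf B).card)).map
    fun a => ((a, 2, a, a) : WangTile)).toFinset

def phi (k : ℕ) (B : Finset WangBar) : Finset WangTile := tilesOf B ∪ pads k B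

theorem mem_pads {k : ℕ} {B : Finset WangBar} {t : WangTile} :
    t ∈ pads k B ↔ ∃ a ∈ ((tileSetColors (tilesOf B)).sort (· ≤ ·)).take
      ((tileSetColors (tilesOf B)).card + k - (tilesOf B).card), t = (a, 2, a, a) := by
  simp only [pads, List.mem_toFinset, List.mem_map, eq_comm]

theorem pads_color_mem {k : ℕ} {B : Finset WangBar} {t : WangTile} (ht : t ∈ pads k B) :
    ∃ a ∈ tileSetColors (tilesOf B), t = (a, 2, a, a) := by
  obtain ⟨a, ha, rfl⟩ := mem_pads.mp ht
  exact ⟨a, (Finset.mem_sort _).mp (List.take_subset _ _ ha), rfl⟩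

theorem cd_phi {B : Finset WangBar} {k : ℕ} (hk : 1 ≤ k) (hcard : B.card = k)
    (hval : ∀ b ∈ B, b.IsValid) : colorDeficiency (phi k B) = k - 1 := by
  classical
  obtain ⟨hkn, hnc⟩ := card_bounds hk hcard hval
  set T0 := tilesOf B with hT0
  set n0 := T0.card with hn0
  set c0 := (tileSetColors T0).card with hc0
  set s := c0 + k - n0 with hs
  set L := ((tileSetColors T0).sort (· ≤ ·)).take s with hL
  have hLlen : L.length = s := by
    rw [hL, List.length_take, Finset.length_sort]
    omega
  have hLnodup : L.Nodup := (List.take_sublist _ _).nodup (Finset.sort_nodup _ _)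
  have hpadsCard : (pads k B).card = s := by
    rw [pads]
    rw [List.toFinset_card_of_nodup, List.length_map, hLlen]
    exact List.Nodup.map (fun a a' h => by simp only [Prod.mk.injEq] at h; exact h.1) hLnodup
  have hdisj : Disjoint T0 (pads k B) := by
    rw [Finset.disjoint_left]
    intro t ht hp
    obtain ⟨a, -, rfl⟩ := pads_color_mem hp
    obtain ⟨b, -, i, -, heq⟩ := mem_tilesOf.mp ht
    have : ecol b i = 2 := congrArg (fun t : WangTile => t.2.1) heq
    have := ecol_mod b i
    omega
  have hcardPhi : (phi k B).card = n0 + s := by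
    rw [phi, Finset.card_union_of_disjoint hdisj, hpadsCard]
  have h2notin : (2 : ℕ) ∉ tileSetColors T0 := fun h => colors_tilesOf_mod h rfl
  have hcolors : tileSetColors (phi k B) = insert 2 (tileSetColors T0) := by
    ext c
    rw [mem_tileSetColors, Finset.mem_insert]
    constructor
    · rintro ⟨t, ht, hct⟩
      rcases Finset.mem_union.mp ht with ht | ht
      · exact Or.inr (mem_tileSetColors.mpr ⟨t, ht, hct⟩)
      · obtain ⟨a, ha, rfl⟩ := pads_color_mem ht
        simp only [WangTile.colors, WangTile.north, WangTile.east, WangTile.south,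
          WangTile.west, Finset.mem_insert, Finset.mem_singleton] at hct
        rcases hct with rfl | rfl | rfl | rfl
        · exact Or.inr ha
        · exact Or.inl rfl
        · exact Or.inr ha
        · exact Or.inr ha
    · have hs1 : 1 ≤ s := by omega
      rintro (rfl | hc)
      · obtain ⟨a, haL⟩ := List.exists_mem_of_length_pos (by omega : 0 < L.length)
        refine ⟨(a, 2, a, a), Finset.mem_union_right _ (mem_pads.mpr ⟨a, haL, rfl⟩), ?_⟩
        simp [WangTile.colors, WangTile.north, WangTile.east, WangTile.south, WangTile.west]
      · obtain ⟨t, ht, hct⟩ := mem_tileSetColors.mp hc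
        exact ⟨t, Finset.mem_union_left _ ht, hct⟩
  have hcolorsCard : (tileSetColors (phi k B)).card = c0 + 1 := by
    rw [hcolors, Finset.card_insert_of_notMem h2notin]
  rw [colorDeficiency, hcardPhi, hcolorsCard]
  omega

theorem isWangTiling_mono {T T' : Finset WangTile} {f : ℤ × ℤ → WangTile} (h : T ⊆ T')
    (hf : IsWangTiling T f) : IsWangTiling T' f :=
  ⟨fun p => h (hf.1 p), hf.2.1, hf.2.2⟩

theorem bars_to_tiles {B : Finset WangBar} (h : BarsTilePlane B) :
    TilesPlane (tilesOf B) := by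
  obtain ⟨g, c1, c2, c3, c4, c5, c6⟩ := h
  refine ⟨fun p => btile (g p).1 (g p).2, fun p => mem_tilesOf.mpr
    ⟨(g p).1, c1 p, (g p).2, c2 p, rfl⟩, fun x y => ?_, fun x y => ?_⟩
  · show ecol (g (x, y)).1 (g (x, y)).2 = wcol (g (x + 1, y)).1 (g (x + 1, y)).2
    by_cases hlt : (g (x, y)).2 + 1 < (g (x, y)).1.len
    · rw [c3 x y hlt]
      have hne : (g (x, y)).2 + 1 ≠ (g (x, y)).1.1.length := Nat.ne_of_lt hlt
      rw [ecol, if_neg hne, wcol, if_neg (Nat.succ_ne_zero _)]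
    · have hlen : (g (x, y)).2 + 1 = (g (x, y)).1.len := by
        have := c2 (x, y); unfold WangBar.len at *; omega
      obtain ⟨h0, hlr⟩ := c5 x y hlen
      unfold WangBar.len at hlen
      rw [ecol, if_pos hlen, wcol, if_pos h0]
      unfold WangBar.left WangBar.right at hlr
      omega
  · show ncol (g (x, y)).1 (g (x, y)).2 = scol (g (x, y + 1)).1 (g (x, y + 1)).2
    have := c6 x y
    unfold WangBar.top WangBar.bottom at this
    rw [ncol, scol, this]

theorem tiles_to_bars {B : Finset WangBar} (h : TilesPlane (tilesOf B)) :
    BarsTilePlane B := by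
  obtain ⟨f, hmem, hH, hV⟩ := h
  have hex : ∀ p : ℤ × ℤ, ∃ b, b ∈ B ∧ ∃ i, i < b.1.length ∧ btile b i = f p := by
    intro p
    simpa using mem_tilesOf.mp (hmem p)
  choose F hF1 G hG hFG using hex
  have key : ∀ p, f p = btile (F p) (G p) := fun p => (hFG p).symm
  have hEW : ∀ x y : ℤ, ecol (F (x, y)) (G (x, y)) = wcol (F (x + 1, y)) (G (x + 1, y)) := by
    intro x y
    have := hH x y
    rwa [key (x, y), key (x + 1, y)] at this
  have hNS : ∀ x y : ℤ, ncol (F (x, y)) (G (x, y)) = scol (F (x, y + 1)) (G (x, y + 1)) := by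
    intro x y
    have := hV x y
    rwa [key (x, y), key (x, y + 1)] at this
  refine ⟨fun p => (F p, G p), fun p => hF1 p, fun p => hG p,
    fun x y hlt => ?_, fun x y hpos => ?_, fun x y hlen => ?_, fun x y => ?_⟩
  · -- next cell right inside the bar
    dsimp only at hlt ⊢
    have he := hEW x y
    unfold WangBar.len at hlt
    rw [ecol, if_neg (by omega)] at he
    rw [wcol] at he
    split at he
    · have := icol_mod (F (x, y)) (G (x, y) + 1); omega
    · obtain ⟨hb, hi⟩ := icol_inj he.symm
      rw [Prod.mk.injEq]
      exact ⟨hb, by omega⟩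
  · -- previous cell left inside the bar
    dsimp only at hpos ⊢
    have hx : x - 1 + 1 = x := by ring
    have he := hEW (x - 1) y
    rw [hx] at he
    rw [wcol, if_neg (by omega)] at he
    rw [ecol] at he
    split at he
    · have := icol_mod (F (x, y)) (G (x, y)); omega
    · obtain ⟨hb, hi⟩ := icol_inj he
      rw [Prod.mk.injEq]
      exact ⟨hb, by omega⟩
  · -- end of bar: next bar starts
    dsimp only at hlen ⊢
    have he := hEW x y
    unfold WangBar.len at hlen
    rw [ecol, if_pos hlen, wcol] at he
    split at he
    · next h0 =>
      refine ⟨h0, ?_⟩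
      unfold WangBar.left WangBar.right
      omega
    · have := icol_mod (F (x + 1, y)) (G (x + 1, y)); omega
  · -- vertical colors
    dsimp only
    have := hNS x y
    rw [ncol, scol] at this
    unfold WangBar.top WangBar.bottom
    omega

theorem phi_tiles_iff {B : Finset WangBar} {k : ℕ} :
    TilesPlane (phi k B) ↔ BarsTilePlane B := by
  constructor
  · rintro ⟨f, hmem, hH, hV⟩
    have hT0 : ∀ p, f p ∈ tilesOf B := by
      intro p
      obtain ⟨x, y⟩ := p
      rcases Finset.mem_union.mp (hmem (x, y)) with h | h
      · exact h
      · exfalso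
        obtain ⟨a, -, heq⟩ := pads_color_mem h
        have h2 : (f (x, y)).east = 2 := by rw [heq]; rfl
        have hw : (f (x + 1, y)).west = 2 := by rw [← hH x y, h2]
        rcases Finset.mem_union.mp (hmem (x + 1, y)) with h' | h'
        · obtain ⟨b, -, i, -, heq'⟩ := mem_tilesOf.mp h'
          have : wcol b i = 2 := by rw [← hw, ← heq']; rfl
          have := wcol_mod b i
          omega
        · obtain ⟨a', ha', heq'⟩ := pads_color_mem h'
          have : a' = 2 := by rw [← hw, heq']; rfl
          subst this
          exact colors_tilesOf_mod ha' rfl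
    exact tiles_to_bars ⟨f, hT0, hH, hV⟩
  · intro h
    obtain ⟨f, hf⟩ := bars_to_tiles h
    exact ⟨f, isWangTiling_mono Finset.subset_union_left hf⟩

section Enc

open Encodable

variable {α : Type*}

def enle' [Encodable α] : α → α → Prop := fun a b => encode a ≤ encode b

instance [Encodable α] : DecidableRel (enle' (α := α)) := fun _ _ => Nat.decLe _ _
instance [Encodable α] : IsTrans α enle' := ⟨fun _ _ _ => Nat.le_trans⟩
instance [Encodable α] : IsAntisymm α enle' :=
  ⟨fun _ _ h h' => encode_injective (Nat.le_antisymm h h')⟩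
instance [Encodable α] : IsTotal α enle' := ⟨fun _ _ => Nat.le_total _ _⟩

def ddl [DecidableEq α] : List α → List α
  | [] => []
  | a :: l => if a ∈ ddl l then ddl l else a :: ddl l

theorem mem_ddl [DecidableEq α] {a : α} : ∀ {l : List α}, a ∈ ddl l ↔ a ∈ l
  | [] => Iff.rfl
  | b :: l => by
    unfold ddl
    split
    · next h =>
      simp only [List.mem_cons, mem_ddl (l := l)]
      constructor
      · exact Or.inr
      · rintro (rfl | h')
        · exact mem_ddl.mp h
        · exact h'
    · simp only [List.mem_cons, mem_ddl (l := l)]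

theorem nodup_ddl [DecidableEq α] : ∀ l : List α, (ddl l).Nodup
  | [] => List.nodup_nil
  | a :: l => by
    unfold ddl
    split
    · exact nodup_ddl l
    · next h => exact List.Nodup.cons h (nodup_ddl l)

theorem length_ddl [DecidableEq α] (l : List α) : (ddl l).length = l.toFinset.card := by
  have h1 : (ddl l).toFinset = l.toFinset := by
    ext a; simp only [List.mem_toFinset]; exact mem_ddl
  rw [← h1, List.toFinset_card_of_nodup (nodup_ddl l)]

def insE [Encodable α] (a : α) : List α → List α
  | [] => [a]
  | b :: l => if encode a ≤ encode b then a :: b :: l else b :: insE a l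

def sortE [Encodable α] : List α → List α
  | [] => []
  | a :: l => insE a (sortE l)

theorem perm_insE [Encodable α] (a : α) : ∀ l : List α, List.Perm (insE a l) (a :: l)
  | [] => List.Perm.refl _
  | b :: l => by
    unfold insE
    split
    · exact List.Perm.refl _
    · exact ((perm_insE a l).cons b).trans (List.Perm.swap a b l)

theorem perm_sortE [Encodable α] : ∀ l : List α, List.Perm (sortE l) l
  | [] => List.Perm.refl _
  | a :: l => (perm_insE a (sortE l)).trans ((perm_sortE l).cons a)

theorem pairwise_insE [Encodable α] {a : α} :
    ∀ {l : List α}, l.Pairwise (fun x y => encode x ≤ encode y) →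
      (insE a l).Pairwise (fun x y => encode x ≤ encode y)
  | [], _ => List.pairwise_singleton _ a
  | b :: l, h => by
    unfold insE
    split
    · next hle =>
      refine List.Pairwise.cons ?_ h
      intro x hx
      rcases List.mem_cons.mp hx with rfl | hx
      · exact hle
      · exact Nat.le_trans hle (List.rel_of_pairwise_cons h hx)
    · next hle =>
      refine List.Pairwise.cons ?_ (pairwise_insE h.of_cons)
      intro x hx
      rcases List.mem_cons.mp (((perm_insE a l).mem_iff).mp hx) with rfl | h'
      · omega
      · exact List.rel_of_pairwise_cons h h'

theorem pairwise_sortE [Encodable α] :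
    ∀ l : List α, (sortE l).Pairwise (fun x y => encode x ≤ encode y)
  | [] => List.Pairwise.nil
  | a :: l => pairwise_insE (pairwise_sortE l)

theorem encode_finset_canon [Encodable α] (S : Finset α) {m : List α} (hn : m.Nodup)
    (hmem : ∀ a, a ∈ m ↔ a ∈ S)
    (hp : m.Pairwise fun x y => encode x ≤ encode y) :
    (Encodable.encode S : ℕ) = Encodable.encode m := by
  classical
  have h0 : (Encodable.encode S : ℕ) = Encodable.encode (S.val.sort enle') := rfl
  have hn0 : (S.val.sort enle').Nodup := by
    have : ((S.val.sort enle' : List α) : Multiset α) = S.val := Multiset.sort_eq _ _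
    have h2 := S.nodup
    rw [← this] at h2
    exact h2
  have hmem0 : ∀ a, a ∈ S.val.sort enle' ↔ a ∈ S := by
    intro a
    rw [← Multiset.mem_coe, Multiset.sort_eq]
    rfl
  have hperm : List.Perm m (S.val.sort enle') :=
    (List.perm_ext_iff_of_nodup hn hn0).mpr fun a => (hmem a).trans (hmem0 a).symm
  have hsorted : List.Pairwise enle' m := hp
  have heq : m = S.val.sort enle' :=
    List.Perm.eq_of_pairwise' hsorted (Multiset.pairwise_sort _ _) hperm
  rw [h0, heq]

theorem decode_encode_finset [Encodable α] (B : Finset α) :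
    ∃ l : List α, Encodable.decode (α := List α) (Encodable.encode B) = some l ∧
      l.Nodup ∧ ∀ a, a ∈ l ↔ a ∈ B := by
  classical
  refine ⟨B.val.sort enle', ?_, ?_, ?_⟩
  · have h0 : (Encodable.encode B : ℕ) = Encodable.encode (B.val.sort enle') := rfl
    rw [h0, Encodable.encodek]
  · have : ((B.val.sort enle' : List α) : Multiset α) = B.val := Multiset.sort_eq _ _
    have h2 := B.nodup
    rw [← this] at h2
    exact h2
  · intro a
    rw [← Multiset.mem_coe, Multiset.sort_eq]
    rfl

theorem sortE_eq_sort {m : List ℕ} {W : Finset ℕ} (hn : m.Nodup)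
    (hmem : ∀ a, a ∈ m ↔ a ∈ W) :
    sortE m = W.sort (· ≤ ·) := by
  refine (fun hp hs => List.Perm.eq_of_pairwise' (r := (· ≤ · : ℕ → ℕ → Prop)) hs (Finset.pairwise_sort _ _) hp) ?_ ?_
  · refine (List.perm_ext_iff_of_nodup (((perm_sortE m).nodup_iff).mpr hn)
      (Finset.sort_nodup _ _)).mpr fun a => ?_
    rw [(perm_sortE m).mem_iff, Finset.mem_sort]
    exact hmem a
  · exact pairwise_sortE m

end Enc

def tilesL (l : List WangBar) : List WangTile :=
  l.flatMap fun b => (List.range b.1.length).map (btile b)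

def colorsL (t : WangTile) : List ℕ := [t.1, t.2.1, t.2.2.1, t.2.2.2]

def padsL (k : ℕ) (l : List WangBar) : List WangTile :=
  ((sortE (ddl ((tilesL l).flatMap colorsL))).take
      ((sortE (ddl ((tilesL l).flatMap colorsL))).length + k - (ddl (tilesL l)).length)).map
    fun a => ((a, 2, a, a) : WangTile)

def FL (k : ℕ) (l : List WangBar) : ℕ :=
  Encodable.encode (sortE (ddl (tilesL l ++ padsL k l)))

def FCode (k n : ℕ) : ℕ := FL k ((Encodable.decode (α := List WangBar) n).getD [])

theorem mem_tilesL {l : List WangBar} {t : WangTile} :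
    t ∈ tilesL l ↔ t ∈ tilesOf l.toFinset := by
  rw [mem_tilesOf]
  simp [tilesL]

theorem mem_colorsL_flat {l : List WangBar} {c : ℕ} :
    c ∈ (tilesL l).flatMap colorsL ↔ c ∈ tileSetColors (tilesOf l.toFinset) := by
  rw [mem_tileSetColors]
  simp only [List.mem_flatMap]
  constructor
  · rintro ⟨t, ht, hc⟩
    refine ⟨t, mem_tilesL.mp ht, ?_⟩
    simp only [colorsL, List.mem_cons, List.not_mem_nil, or_false] at hc
    simp only [WangTile.colors, WangTile.north, WangTile.east, WangTile.south, WangTile.west,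
      Finset.mem_insert, Finset.mem_singleton]
    tauto
  · rintro ⟨t, ht, hc⟩
    refine ⟨t, mem_tilesL.mpr ht, ?_⟩
    simp only [WangTile.colors, WangTile.north, WangTile.east, WangTile.south, WangTile.west,
      Finset.mem_insert, Finset.mem_singleton] at hc
    simp only [colorsL, List.mem_cons, List.not_mem_nil, or_false]
    tauto

theorem cl_eq (l : List WangBar) :
    sortE (ddl ((tilesL l).flatMap colorsL)) =
      (tileSetColors (tilesOf l.toFinset)).sort (· ≤ ·) :=
  sortE_eq_sort (nodup_ddl _) fun a => (mem_ddl).trans mem_colorsL_flat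

theorem tl_len (l : List WangBar) :
    (ddl (tilesL l)).length = (tilesOf l.toFinset).card := by
  rw [length_ddl]
  congr 1
  ext t
  rw [List.mem_toFinset]
  exact mem_tilesL

theorem FL_eq (k : ℕ) (l : List WangBar) :
    FL k l = Encodable.encode (phi k l.toFinset) := by
  refine (encode_finset_canon _ ?_ ?_ ?_).symm
  · exact ((perm_sortE _).nodup_iff).mpr (nodup_ddl _)
  · intro t
    rw [(perm_sortE _).mem_iff, mem_ddl, List.mem_append]
    rw [phi, Finset.mem_union]
    constructor
    · rintro (h | h)
      · exact Or.inl (mem_tilesL.mp h)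
      · refine Or.inr ?_
        rw [mem_pads]
        simp only [padsL, List.mem_map] at h
        obtain ⟨a, ha, rfl⟩ := h
        rw [cl_eq, Finset.length_sort, tl_len] at ha
        exact ⟨a, ha, rfl⟩
    · rintro (h | h)
      · exact Or.inl (mem_tilesL.mpr h)
      · refine Or.inr ?_
        rw [mem_pads] at h
        obtain ⟨a, ha, rfl⟩ := h
        simp only [padsL, List.mem_map]
        rw [cl_eq, Finset.length_sort, tl_len]
        exact ⟨a, ha, rfl⟩
  · exact pairwise_sortE _

theorem FCode_spec (k : ℕ) (B : Finset WangBar) :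
    FCode k (Encodable.encode B) = Encodable.encode (phi k B) := by
  obtain ⟨l, hdec, hn, hmem⟩ := decode_encode_finset B
  rw [FCode, hdec, Option.getD_some, FL_eq]
  have : l.toFinset = B := by
    ext a
    rw [List.mem_toFinset]
    exact hmem a
  rw [this]

section PR

open Primrec

theorem primrec_lcode : Primrec lcode := by
  have hh : Primrec₂ fun (_ : List ℕ) (p : ℕ × ℕ) => Nat.pair p.1 p.2 + 1 :=
    Primrec.succ.comp (Primrec₂.natPair.comp (Primrec.fst.comp Primrec.snd)
      (Primrec.snd.comp Primrec.snd))
  have h := Primrec.list_foldr (f := @id (List ℕ)) (g := fun _ => 0)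
    (h := fun _ p => Nat.pair p.1 p.2 + 1) Primrec.id (Primrec.const 0) hh
  refine h.of_eq fun l => ?_
  dsimp only [id]
  induction l with
  | nil => rfl
  | cons a l ih => rw [List.foldr_cons, ih]; rfl

theorem primrec_barCode : Primrec barCode :=
  Primrec₂.natPair.comp (primrec_lcode.comp Primrec.fst)
    (Primrec₂.natPair.comp (primrec_lcode.comp (Primrec.fst.comp Primrec.snd))
      (Primrec₂.natPair.comp (Primrec.fst.comp (Primrec.snd.comp Primrec.snd))
        (Primrec.snd.comp (Primrec.snd.comp Primrec.snd))))

theorem primrec_icol : Primrec₂ icol :=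
  Primrec.to₂ <| Primrec.succ.comp (Primrec.nat_mul.comp (Primrec.const 3)
    (Primrec₂.natPair.comp (primrec_barCode.comp Primrec.fst) Primrec.snd))

theorem primrec_btile : Primrec₂ btile := by
  have hn : Primrec fun p : WangBar × ℕ => ncol p.1 p.2 :=
    Primrec.nat_mul.comp (Primrec.const 3)
      ((Primrec.list_getD 0).comp (Primrec.fst.comp Primrec.fst) Primrec.snd)
  have he : Primrec fun p : WangBar × ℕ => ecol p.1 p.2 := by
    refine Primrec.ite (c := fun p : WangBar × ℕ => p.2 + 1 = p.1.1.length)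
      (Primrec.eq.comp (Primrec.succ.comp Primrec.snd)
        (Primrec.list_length.comp (Primrec.fst.comp Primrec.fst))) ?_ ?_
    · exact Primrec.nat_mul.comp (Primrec.const 3)
        (Primrec.snd.comp (Primrec.snd.comp (Primrec.snd.comp Primrec.fst)))
    · exact primrec_icol.comp Primrec.fst (Primrec.succ.comp Primrec.snd)
  have hs : Primrec fun p : WangBar × ℕ => scol p.1 p.2 :=
    Primrec.nat_mul.comp (Primrec.const 3)
      ((Primrec.list_getD 0).comp (Primrec.fst.comp (Primrec.snd.comp Primrec.fst)) Primrec.snd)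
  have hw : Primrec fun p : WangBar × ℕ => wcol p.1 p.2 := by
    refine Primrec.ite (c := fun p : WangBar × ℕ => p.2 = 0)
      (Primrec.eq.comp Primrec.snd (Primrec.const 0)) ?_ ?_
    · exact Primrec.nat_mul.comp (Primrec.const 3)
        (Primrec.fst.comp (Primrec.snd.comp (Primrec.snd.comp Primrec.fst)))
    · exact primrec_icol.comp Primrec.fst Primrec.snd
  exact Primrec.to₂ (hn.pair (he.pair (hs.pair hw)))

theorem primrec_tilesL : Primrec tilesL :=
  Primrec.list_flatMap Primrec.id
    (Primrec.list_map
      (Primrec.list_range.comp (Primrec.list_length.comp (Primrec.fst.comp Primrec.snd)))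
      (primrec_btile.comp (Primrec.snd.comp Primrec.fst) Primrec.snd))

theorem primrec_colorsL : Primrec colorsL :=
  Primrec.list_cons.comp Primrec.fst
    (Primrec.list_cons.comp (Primrec.fst.comp Primrec.snd)
      (Primrec.list_cons.comp (Primrec.fst.comp (Primrec.snd.comp Primrec.snd))
        (Primrec.list_cons.comp (Primrec.snd.comp (Primrec.snd.comp Primrec.snd))
          (Primrec.const []))))

theorem primrec_ddl {α : Type*} [Primcodable α] [DecidableEq α] :
    Primrec (ddl : List α → List α) := by
  have hmem : PrimrecPred fun p : List α × (α × List α) => p.2.1 ∈ p.2.2 := by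
    have h1 : PrimrecPred fun p : List α × (α × List α) =>
        p.2.2.idxOf p.2.1 < p.2.2.length :=
      Primrec.nat_lt.comp (Primrec.list_idxOf.comp (Primrec.fst.comp Primrec.snd)
        (Primrec.snd.comp Primrec.snd)) (Primrec.list_length.comp (Primrec.snd.comp Primrec.snd))
    refine PrimrecPred.of_eq h1 fun p => ?_
    exact List.idxOf_lt_length_iff
  have hh : Primrec₂ fun (_ : List α) (p : α × List α) =>
      if p.1 ∈ p.2 then p.2 else p.1 :: p.2 :=
    Primrec.ite hmem (Primrec.snd.comp Primrec.snd)
      (Primrec.list_cons.comp (Primrec.fst.comp Primrec.snd) (Primrec.snd.comp Primrec.snd))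
  have h := Primrec.list_foldr (f := @id (List α)) (g := fun _ => [])
    (h := fun _ p => if p.1 ∈ p.2 then p.2 else p.1 :: p.2) Primrec.id (Primrec.const []) hh
  refine h.of_eq fun l => ?_
  dsimp only [id]
  induction l with
  | nil => rfl
  | cons a l ih =>
    rw [List.foldr_cons, ih]
    conv_rhs => rw [ddl]

theorem primrec_insE {α : Type*} [Primcodable α] :
    Primrec₂ (insE : α → List α → List α) := by
  have hh : Primrec₂ fun (p : α × List α) (q : α × List α × List α) =>
      if Encodable.encode p.1 ≤ Encodable.encode q.1 then p.1 :: q.1 :: q.2.1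
      else q.1 :: q.2.2 := by
    refine Primrec.ite (Primrec.nat_le.comp (Primrec.encode.comp (Primrec.fst.comp Primrec.fst))
      (Primrec.encode.comp (Primrec.fst.comp Primrec.snd))) ?_ ?_
    · exact Primrec.list_cons.comp (Primrec.fst.comp Primrec.fst)
        (Primrec.list_cons.comp (Primrec.fst.comp Primrec.snd)
          (Primrec.fst.comp (Primrec.snd.comp Primrec.snd)))
    · exact Primrec.list_cons.comp (Primrec.fst.comp Primrec.snd)
        (Primrec.snd.comp (Primrec.snd.comp Primrec.snd))
  have h := Primrec.list_rec (f := fun p : α × List α => p.2)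
    (g := fun p => [p.1])
    (h := fun p q => if Encodable.encode p.1 ≤ Encodable.encode q.1 then p.1 :: q.1 :: q.2.1
      else q.1 :: q.2.2) Primrec.snd (Primrec.list_cons.comp Primrec.fst (Primrec.const [])) hh
  refine h.of_eq fun p => ?_
  obtain ⟨a, l⟩ := p
  induction l with
  | nil => rfl
  | cons b l ih =>
    show (if Encodable.encode a ≤ Encodable.encode b then _ else _) = insE a (b :: l)
    simp only [insE]
    split
    · rfl
    · rw [← ih]

theorem primrec_sortE {α : Type*} [Primcodable α] :
    Primrec (sortE : List α → List α) := by
  have h := Primrec.list_foldr (f := @id (List α)) (g := fun _ => [])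
    (h := fun _ p => insE p.1 p.2) Primrec.id (Primrec.const [])
    (primrec_insE.comp (Primrec.fst.comp Primrec.snd) (Primrec.snd.comp Primrec.snd))
  refine h.of_eq fun l => ?_
  dsimp only [id]
  induction l with
  | nil => rfl
  | cons a l ih =>
    rw [List.foldr_cons, ih]
    conv_rhs => rw [sortE]

theorem primrec_take : Primrec₂ fun (l : List ℕ) (n : ℕ) => l.take n := by
  have h : Primrec fun p : List ℕ × ℕ =>
      (List.range (min p.2 p.1.length)).map fun i => p.1.getD i 0 :=
    Primrec.list_map
      (Primrec.list_range.comp (Primrec.nat_min.comp Primrec.snd (Primrec.list_length.comp Primrec.fst)))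
      ((Primrec.list_getD 0).comp (Primrec.fst.comp Primrec.fst) Primrec.snd)
  refine h.of_eq fun p => ?_
  obtain ⟨l, n⟩ := p
  apply List.ext_getElem
  · simp [List.length_take]
  · intro i h1 h2
    simp only [List.length_map, List.length_range] at h1
    simp only [List.getElem_map, List.getElem_range, List.getElem_take]
    exact List.getD_eq_getElem l 0 (by omega)

theorem primrec_FL (k : ℕ) : Primrec (FL k) := by
  have hcl : Primrec fun l : List WangBar => sortE (ddl ((tilesL l).flatMap colorsL)) :=
    primrec_sortE.comp (primrec_ddl.comp
      (Primrec.list_flatMap primrec_tilesL (primrec_colorsL.comp Primrec.snd)))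
  have hpads : Primrec (padsL k) := by
    have htake : Primrec fun l : List WangBar =>
        (sortE (ddl ((tilesL l).flatMap colorsL))).take
          ((sortE (ddl ((tilesL l).flatMap colorsL))).length + k - (ddl (tilesL l)).length) :=
      primrec_take.comp hcl (Primrec.nat_sub.comp
        (Primrec.nat_add.comp (Primrec.list_length.comp hcl) (Primrec.const k))
        (Primrec.list_length.comp (primrec_ddl.comp primrec_tilesL)))
    exact Primrec.list_map htake
      (Primrec.snd.pair ((Primrec.const 2).pair (Primrec.snd.pair Primrec.snd)))
  exact Primrec.encode.comp (primrec_sortE.comp (primrec_ddl.comp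
    (Primrec.list_append.comp primrec_tilesL hpads)))

theorem primrec_FCode (k : ℕ) : Primrec (FCode k) :=
  (primrec_FL k).comp (Primrec.option_getD.comp Primrec.decode (Primrec.const []))

end PR

end JR

/-- **Jeandel–Rolin.**  If the tiling problem for `k` Wang bars is undecidable, then
the tiling problem for Wang tiles with color deficiency `k - 1` is undecidable. -/
theorem wang_bars_undecidable_implies_color_deficiency_undecidable :
    ∀ k : ℕ, 1 ≤ k →
      (¬ ∃ g : ℕ → Bool, Computable g ∧
          ∀ B : Finset WangBar, B.card = k → (∀ b ∈ B, b.IsValid) →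
            (g (Encodable.encode B) = true ↔ BarsTilePlane B)) →
      (¬ ∃ g : ℕ → Bool, Computable g ∧
          ∀ T : Finset WangTile, colorDeficiency T = k - 1 →
            (g (Encodable.encode T) = true ↔ TilesPlane T)) := by
  intro k hk hbar htile
  apply hbar
  obtain ⟨h, hcomp, hspec⟩ := htile
  refine ⟨fun n => h (JR.FCode k n), hcomp.comp (JR.primrec_FCode k).to_comp, ?_⟩
  intro B hcard hval
  show h (JR.FCode k (Encodable.encode B)) = true ↔ BarsTilePlane B
  rw [JR.FCode_spec k B, hspec _ (JR.cd_phi hk hcard hval)]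
  exact JR.phi_tiles_iff
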